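/- Let p be a prime, n ≥ 1, and 1 ≤ l ≤ n−1. Let V₀ = span_{ℚ_p}(e₁, …, e_l) and W₀ = span_{ℚ_p}(e_{l+1}, …, e_n). Let L and L' be lattices of W₀ (free ℤ_p-submodules of W₀ of rank n−l), and suppose g ∈ SL_n(ℤ_p) satisfies g·(V₀ ⊕ L) = V₀ ⊕ L'. Let b and b' be ℤ_p-bases of L and L' respectively, and let A and A' be the (n−l)×(n−l) matrices of their coordinates with respect to e_{l+1}, …, e_n. Then v_p(det A) ≡ v_p(det A') (mod n−l); that is, the lattices L and L' have the same type. -/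

import Mathlib

open scoped MatrixGroups

/-- The image of a `ℤ_p`-submodule of `ℚ_p^n` under the matrix `A`. -/
noncomputable def zAct {p : ℕ} [Fact p.Prime] {n : ℕ} (A : Matrix (Fin n) (Fin n) ℚ_[p])
    (M : Submodule ℤ_[p] (Fin n → ℚ_[p])) : Submodule ℤ_[p] (Fin n → ℚ_[p]) :=
  M.map (A.mulVecLin.restrictScalars ℤ_[p])

/-- A matrix in `SL_n(ℤ_p)`, viewed as a `p`-adic matrix. -/
noncomputable def pMat {p : ℕ} [Fact p.Prime] {n : ℕ}
    (g : Matrix.SpecialLinearGroup (Fin n) ℤ_[p]) : Matrix (Fin n) (Fin n) ℚ_[p] :=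
  (g : Matrix (Fin n) (Fin n) ℤ_[p]).map ((↑) : ℤ_[p] → ℚ_[p])

/-- The standard subspace `V₀ = ℚ_p e₁ ⊕ ⋯ ⊕ ℚ_p e_l` of `ℚ_p^n`. -/
noncomputable def stdSubspace (p n l : ℕ) [Fact p.Prime] :
    Submodule ℚ_[p] (Fin n → ℚ_[p]) :=
  Submodule.span ℚ_[p] {w | ∃ i : Fin n, i.val < l ∧ w = Pi.single i 1}

/-- The complementary subspace `W₀ = ℚ_p e_{l+1} ⊕ ⋯ ⊕ ℚ_p e_n` of `ℚ_p^n`. -/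
noncomputable def stdComplement (p n l : ℕ) [Fact p.Prime] :
    Submodule ℚ_[p] (Fin n → ℚ_[p]) :=
  Submodule.span ℚ_[p] {w | ∃ i : Fin n, l ≤ i.val ∧ w = Pi.single i 1}

namespace TypePreservedAux

/-- The index embedding `Fin (n - l) → Fin n`, `i ↦ l + i`. -/
def emb (n l : ℕ) (h : l < n) (i : Fin (n - l)) : Fin n :=
  ⟨l + i.val, by have := i.isLt; omega⟩

/-- The index splitting `Fin l ⊕ Fin (n - l) ≃ Fin n`. -/
def esum (n l : ℕ) (h : l < n) : Fin l ⊕ Fin (n - l) ≃ Fin n where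
  toFun := Sum.elim (fun a => ⟨a.val, by have := a.isLt; omega⟩) (emb n l h)
  invFun j := if hj : j.val < l then Sum.inl ⟨j.val, hj⟩ else
    Sum.inr ⟨j.val - l, by have := j.isLt; omega⟩
  left_inv := by
    rintro (a | i)
    · simp
    · have h1 : ¬ ((emb n l h i).val < l) := by simp [emb]
      rw [Sum.elim_inr]
      beta_reduce
      rw [dif_neg h1]
      congr 1
      ext
      simp [emb]
  right_inv := by
    intro j
    by_cases hj : j.val < l
    · simp [hj]
    · simp only [hj, dif_neg, not_false_iff, Sum.elim_inr]
      ext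
      simp [emb]
      omega

lemma sum_split {M : Type*} [AddCommMonoid M] (n l : ℕ) (h : l < n) (F : Fin n → M) :
    ∑ j, F j = (∑ a : Fin l, F ⟨a.val, by have := a.isLt; omega⟩) +
      ∑ i, F (emb n l h i) := by
  rw [← Equiv.sum_comp (esum n l h) F, Fintype.sum_sum_type]
  rfl

lemma val_coe_zero {p : ℕ} [Fact p.Prime] {a c : ℤ_[p]} (h : a * c = 1) :
    ((a : ℚ_[p])).valuation = 0 := by
  have ha : a ≠ 0 := by rintro rfl; simp at h
  have hc : c ≠ 0 := by rintro rfl; simp at h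
  have ha' : (a : ℚ_[p]) ≠ 0 := PadicInt.coe_ne_zero.mpr ha
  have hc' : (c : ℚ_[p]) ≠ 0 := PadicInt.coe_ne_zero.mpr hc
  have h1 : (a : ℚ_[p]) * c = 1 := by exact_mod_cast congrArg (fun z : ℤ_[p] => (z : ℚ_[p])) h
  have h2 := Padic.valuation_mul (p := p) ha' hc'
  rw [h1, Padic.valuation_one] at h2
  have h3 : (0 : ℤ) ≤ (a : ℚ_[p]).valuation := PadicInt.valuation_coe_nonneg (x := a)
  have h4 : (0 : ℤ) ≤ (c : ℚ_[p]).valuation := PadicInt.valuation_coe_nonneg (x := c)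
  omega

end TypePreservedAux

open TypePreservedAux

set_option maxHeartbeats 2000000 in
/-- **Proposition 5.7 (types are preserved).**  If `g ∈ SL_n(ℤ_p)` carries
`V₀ ⊕ L` onto `V₀ ⊕ L'`, where `L, L'` are lattices of
`W₀ = ℚ_p e_{l+1} ⊕ ⋯ ⊕ ℚ_p e_n`, then `L` and `L'` have the same type: the
valuations of the determinants of coordinate matrices of bases of `L` and `L'`
agree modulo `n - l`. -/
theorem type_preserved (p n l : ℕ) [Fact p.Prime] (hn : 1 ≤ n) (hl1 : 1 ≤ l)
    (hl2 : l ≤ n - 1)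
    (L L' : Submodule ℤ_[p] (Fin n → ℚ_[p]))
    (hL : L ≤ (stdComplement p n l).restrictScalars ℤ_[p])
    (hL' : L' ≤ (stdComplement p n l).restrictScalars ℤ_[p])
    (b : Module.Basis (Fin (n - l)) ℤ_[p] ↥L) (b' : Module.Basis (Fin (n - l)) ℤ_[p] ↥L')
    (g : Matrix.SpecialLinearGroup (Fin n) ℤ_[p])
    (hg : zAct (pMat g) ((stdSubspace p n l).restrictScalars ℤ_[p] ⊔ L) =
      (stdSubspace p n l).restrictScalars ℤ_[p] ⊔ L') :
    (Matrix.det (Matrix.of fun i j : Fin (n - l) =>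
        ((b j : Fin n → ℚ_[p]) ⟨l + i.val, by have := i.isLt; omega⟩))).valuation ≡
      (Matrix.det (Matrix.of fun i j : Fin (n - l) =>
        ((b' j : Fin n → ℚ_[p]) ⟨l + i.val, by have := i.isLt; omega⟩))).valuation
      [ZMOD ((n : ℤ) - (l : ℤ))] := by
  have hln : l < n := by omega
  set gm : Matrix (Fin n) (Fin n) ℤ_[p] := (g : Matrix (Fin n) (Fin n) ℤ_[p]) with hgm
  set gq : Matrix (Fin n) (Fin n) ℚ_[p] := pMat g with hgq
  -- the coordinate projection onto the last `n - l` coordinates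
  set πz : (Fin n → ℚ_[p]) →ₗ[ℤ_[p]] (Fin (n - l) → ℚ_[p]) :=
    LinearMap.funLeft ℤ_[p] ℚ_[p] (emb n l hln) with hπz
  set c : Fin (n - l) → Fin (n - l) → ℚ_[p] :=
    fun j => πz (b j : Fin n → ℚ_[p]) with hc
  set c' : Fin (n - l) → Fin (n - l) → ℚ_[p] :=
    fun j => πz (b' j : Fin n → ℚ_[p]) with hc'
  -- coordinate vanishing lemmas
  have hV0 : ∀ v ∈ stdSubspace p n l, ∀ j : Fin n, l ≤ j.val → v j = 0 := by
    intro v hv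
    induction hv using Submodule.span_induction with
    | mem x hx =>
      rcases hx with ⟨i, hi, rfl⟩
      intro j hj
      exact Pi.single_eq_of_ne (Fin.ne_of_val_ne (by omega)) 1
    | zero => intro j _; rfl
    | add x y hx hy ihx ihy => intro j hj; simp [ihx j hj, ihy j hj]
    | smul a x hx ih => intro j hj; simp [ih j hj]
  have hW0 : ∀ v ∈ stdComplement p n l, ∀ j : Fin n, j.val < l → v j = 0 := by
    intro v hv
    induction hv using Submodule.span_induction with
    | mem x hx =>
      rcases hx with ⟨i, hi, rfl⟩
      intro j hj
      exact Pi.single_eq_of_ne (Fin.ne_of_val_ne (by omega)) 1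
    | zero => intro j _; rfl
    | add x y hx hy ihx ihy => intro j hj; simp [ihx j hj, ihy j hj]
    | smul a x hx ih => intro j hj; simp [ih j hj]
  have hLlow : ∀ x ∈ L, ∀ j : Fin n, j.val < l → x j = 0 := fun x hx => hW0 x (hL hx)
  have hL'low : ∀ x ∈ L', ∀ j : Fin n, j.val < l → x j = 0 := fun x hx => hW0 x (hL' hx)
  -- the target span
  set S : Submodule ℤ_[p] (Fin (n - l) → ℚ_[p]) :=
    Submodule.span ℤ_[p] (Set.range c') with hS
  have hπL' : ∀ x, ∀ hx : x ∈ L', πz x ∈ S := by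
    intro x hx
    have hrep : x = ∑ i, b'.repr ⟨x, hx⟩ i • (b' i : Fin n → ℚ_[p]) := by
      have := b'.sum_repr ⟨x, hx⟩
      calc x = ((∑ i, b'.repr ⟨x, hx⟩ i • b' i : L') : Fin n → ℚ_[p]) := by rw [this]
        _ = ∑ i, b'.repr ⟨x, hx⟩ i • (b' i : Fin n → ℚ_[p]) := by
            push_cast
            rfl
    rw [hrep, map_sum]
    refine Submodule.sum_mem _ fun i _ => ?_
    rw [map_smul]
    exact Submodule.smul_mem _ _ (Submodule.subset_span ⟨i, rfl⟩)
  have hsupS : ∀ y ∈ (stdSubspace p n l).restrictScalars ℤ_[p] ⊔ L', πz y ∈ S := by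
    intro y hy
    rcases Submodule.mem_sup.1 hy with ⟨v, hv, x, hx, rfl⟩
    rw [map_add]
    have hv0 : πz v = 0 := funext fun i => hV0 v hv _ (Nat.le_add_right l i.val)
    rw [hv0, zero_add]
    exact hπL' x hx
  -- boundedness of `S`
  set C : ℝ := ∑ i, ‖c' i‖ with hCdef
  have hC0 : (0 : ℝ) ≤ C := Finset.sum_nonneg fun i _ => norm_nonneg _
  have hbound : ∀ z ∈ S, ‖z‖ ≤ C := by
    intro z hz
    induction hz using Submodule.span_induction with
    | mem x hx =>
      rcases hx with ⟨i, rfl⟩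
      exact Finset.single_le_sum (f := fun i => ‖c' i‖) (fun i _ => norm_nonneg _)
        (Finset.mem_univ i)
    | zero => simpa using hC0
    | add x y hx hy ihx ihy =>
      have hmax : ‖x + y‖ ≤ max ‖x‖ ‖y‖ := by
        rw [pi_norm_le_iff_of_nonneg (le_max_of_le_left (norm_nonneg _))]
        intro i
        calc ‖(x + y) i‖ = ‖x i + y i‖ := rfl
          _ ≤ max ‖x i‖ ‖y i‖ := IsUltrametricDist.norm_add_le_max _ _
          _ ≤ max ‖x‖ ‖y‖ := max_le_max (norm_le_pi_norm x i) (norm_le_pi_norm y i)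
      exact hmax.trans (max_le ihx ihy)
    | smul a x hx ih =>
      refine le_trans ?_ ih
      rw [pi_norm_le_iff_of_nonneg (norm_nonneg x)]
      intro i
      have h1 : (a • x) i = (a : ℚ_[p]) * x i := by
        simp [Pi.smul_apply, Algebra.smul_def, PadicInt.algebraMap_apply]
      rw [h1, norm_mul]
      calc ‖(a : ℚ_[p])‖ * ‖x i‖ ≤ 1 * ‖x i‖ :=
            mul_le_mul_of_nonneg_right a.2 (norm_nonneg _)
        _ = ‖x i‖ := one_mul _
        _ ≤ ‖x‖ := norm_le_pi_norm x i
  -- image of the big module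
  have himg : ∀ x ∈ (stdSubspace p n l).restrictScalars ℤ_[p] ⊔ L,
      gq.mulVec x ∈ (stdSubspace p n l).restrictScalars ℤ_[p] ⊔ L' := by
    intro x hx
    rw [← hg]
    exact Submodule.mem_map.2 ⟨x, hx, rfl⟩
  -- the lower-left block of `g` vanishes
  have hlow : ∀ i : Fin (n - l), ∀ j : Fin n, j.val < l → gq (emb n l hln i) j = 0 := by
    intro i j hj
    set y : Fin (n - l) → ℚ_[p] := πz (gq.mulVec (Pi.single j 1)) with hy
    have hyS : ∀ k : ℕ, ((p : ℚ_[p]) ^ k)⁻¹ • y ∈ S := by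
      intro k
      have hsingle : (Pi.single j (1 : ℚ_[p]) : Fin n → ℚ_[p]) ∈ stdSubspace p n l :=
        Submodule.subset_span ⟨j, hj, rfl⟩
      have hmem : ((p : ℚ_[p]) ^ k)⁻¹ • (Pi.single j 1 : Fin n → ℚ_[p]) ∈
          (stdSubspace p n l).restrictScalars ℤ_[p] ⊔ L :=
        Submodule.mem_sup_left
          (Submodule.smul_mem (stdSubspace p n l) _ hsingle)
      have h2 := hsupS _ (himg _ hmem)
      rw [Matrix.mulVec_smul] at h2
      exact h2
    have hy0 : y = 0 := by
      by_contra hy0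
      have hpos : 0 < ‖y‖ := norm_pos_iff.2 hy0
      obtain ⟨k, hk⟩ := pow_unbounded_of_one_lt (C / ‖y‖)
        (show (1 : ℝ) < p from by exact_mod_cast (Fact.out : p.Prime).one_lt)
      have hb2 := hbound _ (hyS k)
      rw [norm_smul] at hb2
      have hnp : ‖((p : ℚ_[p]) ^ k)⁻¹‖ = (p : ℝ) ^ k := by
        rw [norm_inv, Padic.norm_p_pow, ← zpow_neg, neg_neg, zpow_natCast]
      rw [hnp] at hb2
      have hlt : C < (p : ℝ) ^ k * ‖y‖ := by
        rw [div_lt_iff₀ hpos] at hk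
        linarith
      linarith
    have h3 := congrFun hy0 i
    have h4 : y i = gq (emb n l hln i) j * 1 := by
      simp [hy, Matrix.mulVec_single, πz, LinearMap.funLeft_apply]
    rw [h4] at h3
    simpa using h3
  have hlowz : ∀ i : Fin (n - l), ∀ j : Fin n, j.val < l → gm (emb n l hln i) j = 0 := by
    intro i j hj
    have h12 := hlow i j hj
    rw [hgq] at h12
    have h13 : ((gm (emb n l hln i) j : ℤ_[p]) : ℚ_[p]) = 0 := by
      exact h12
    rwa [PadicInt.coe_eq_zero] at h13
  -- `g` kills `V₀` after projection
  have hVkill : ∀ v ∈ stdSubspace p n l, πz (gq.mulVec v) = 0 := by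
    intro v hv
    funext i
    show ∑ j, gq (emb n l hln i) j * v j = 0
    refine Finset.sum_eq_zero fun j _ => ?_
    by_cases hj : j.val < l
    · rw [hlow i j hj, zero_mul]
    · rw [hV0 v hv j (by omega), mul_zero]
  -- the lower-right block
  set Dq : Matrix (Fin (n - l)) (Fin (n - l)) ℚ_[p] :=
    Matrix.of fun i j => gq (emb n l hln i) (emb n l hln j) with hDqdef
  have hmulW : ∀ x : Fin n → ℚ_[p], (∀ j : Fin n, j.val < l → x j = 0) →
      πz (gq.mulVec x) = Dq.mulVec (πz x) := by
    intro x hx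
    funext i
    show ∑ j, gq (emb n l hln i) j * x j = ∑ j', Dq i j' * (πz x) j'
    rw [sum_split n l hln (fun j => gq (emb n l hln i) j * x j)]
    have h1 : (∑ a : Fin l,
        gq (emb n l hln i) ⟨a.val, by have := a.isLt; omega⟩ *
          x ⟨a.val, by have := a.isLt; omega⟩) = 0 :=
      Finset.sum_eq_zero fun a _ => by rw [hx _ a.isLt, mul_zero]
    rw [h1, zero_add]
    rfl
  -- determinant of the lower-right block is a unit
  set D : Matrix (Fin (n - l)) (Fin (n - l)) ℤ_[p] :=
    Matrix.of fun i j => gm (emb n l hln i) (emb n l hln j) with hDdef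
  have hDq : Dq = D.map ((↑) : ℤ_[p] → ℚ_[p]) := rfl
  have hdet : (Matrix.of fun a a' : Fin l =>
      gm ⟨a.val, by have := a.isLt; omega⟩ ⟨a'.val, by have := a'.isLt; omega⟩).det * D.det = 1 := by
    have h0 : gm.submatrix (esum n l hln) (esum n l hln) =
        Matrix.fromBlocks
          (Matrix.of fun a a' : Fin l =>
            gm ⟨a.val, by have := a.isLt; omega⟩ ⟨a'.val, by have := a'.isLt; omega⟩)
          (Matrix.of fun a j' => gm ⟨a.val, by have := a.isLt; omega⟩ (emb n l hln j'))
          0 D := by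
      ext i j
      rcases i with i | i <;> rcases j with j | j
      · rfl
      · rfl
      · exact hlowz i ⟨j.val, by have := j.isLt; omega⟩ j.isLt
      · rfl
    have h1 := Matrix.det_submatrix_equiv_self (esum n l hln) gm
    rw [h0, Matrix.det_fromBlocks_zero₂₁] at h1
    rw [h1]
    exact g.2
  -- columns of `Dq * A` lie in `S`
  have hcol : ∀ j, Dq.mulVec (c j) ∈ S := by
    intro j
    have hbj : ((b j : L) : Fin n → ℚ_[p]) ∈
        (stdSubspace p n l).restrictScalars ℤ_[p] ⊔ L :=
      Submodule.mem_sup_right (b j).2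
    have h1 := hsupS _ (himg _ hbj)
    rwa [hmulW _ (hLlow _ (b j).2)] at h1
  have hu : ∀ j, ∃ u : Fin (n - l) → ℤ_[p], ∑ i, u i • c' i = Dq.mulVec (c j) :=
    fun j => (Submodule.mem_span_range_iff_exists_fun ℤ_[p]).1 (hcol j)
  choose u huu using hu
  -- columns of `A'` lie in the span of columns of `Dq * A`
  set T : (Fin (n - l) → ℚ_[p]) →ₗ[ℤ_[p]] (Fin (n - l) → ℚ_[p]) :=
    Dq.mulVecLin.restrictScalars ℤ_[p] with hT
  have hw : ∀ j, ∃ w : Fin (n - l) → ℤ_[p], ∑ i, w i • Dq.mulVec (c i) = c' j := by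
    intro j
    have hbj' : ((b' j : L') : Fin n → ℚ_[p]) ∈
        (stdSubspace p n l).restrictScalars ℤ_[p] ⊔ L' :=
      Submodule.mem_sup_right (b' j).2
    rw [← hg] at hbj'
    rcases Submodule.mem_map.1 hbj' with ⟨x, hx, hxe⟩
    rcases Submodule.mem_sup.1 hx with ⟨v, hv, z, hz, rfl⟩
    refine ⟨b.repr ⟨z, hz⟩, ?_⟩
    have hzrep : z = ∑ i, b.repr ⟨z, hz⟩ i • (b i : Fin n → ℚ_[p]) := by
      have := b.sum_repr ⟨z, hz⟩
      calc z = ((∑ i, b.repr ⟨z, hz⟩ i • b i : L) : Fin n → ℚ_[p]) := by rw [this]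
        _ = ∑ i, b.repr ⟨z, hz⟩ i • (b i : Fin n → ℚ_[p]) := by
            push_cast
            rfl
    have hπzrep : πz z = ∑ i, b.repr ⟨z, hz⟩ i • c i := by
      conv_lhs => rw [hzrep]
      rw [map_sum]
      simp only [map_smul]
      rfl
    have h2 : Dq.mulVec (πz z) = ∑ i, b.repr ⟨z, hz⟩ i • Dq.mulVec (c i) := by
      have h3 : T (πz z) = ∑ i, b.repr ⟨z, hz⟩ i • T (c i) := by
        rw [hπzrep, map_sum]
        simp only [map_smul]
      simpa [hT, Matrix.mulVecLin_apply] using h3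
    rw [← h2]
    have hgv : gq.mulVec (v + z) = (b' j : Fin n → ℚ_[p]) := hxe
    have h4 : πz (gq.mulVec (v + z)) = Dq.mulVec (πz z) := by
      rw [Matrix.mulVec_add, map_add, hVkill v hv, zero_add, hmulW z (hLlow z hz)]
    rw [← h4, hgv]
  choose w hww using hw
  -- linear independence of `c'`
  have hinj' : LinearMap.ker (πz.comp L'.subtype) = ⊥ := by
    rw [LinearMap.ker_eq_bot']
    intro x hx
    apply Subtype.ext
    funext jn
    by_cases hj : jn.val < l
    · exact hL'low _ x.2 jn hj
    · have hjlt : jn.val - l < n - l := by have := jn.isLt; omega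
      have hemb : emb n l hln ⟨jn.val - l, hjlt⟩ = jn := by
        ext
        simp [emb]
        omega
      have h5 := congrFun hx ⟨jn.val - l, hjlt⟩
      simpa [πz, LinearMap.funLeft_apply, hemb] using h5
  have hindZ : LinearIndependent ℤ_[p] c' := by
    have h6 := b'.linearIndependent.map' (πz.comp L'.subtype) hinj'
    exact h6
  have hindQ : LinearIndependent ℚ_[p] c' :=
    (LinearIndependent.iff_fractionRing ℤ_[p] ℚ_[p]).1 hindZ
  set A : Matrix (Fin (n - l)) (Fin (n - l)) ℚ_[p] := Matrix.of fun i j => c j i with hA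
  set A' : Matrix (Fin (n - l)) (Fin (n - l)) ℚ_[p] := Matrix.of fun i j => c' j i with hA'
  have hA'det : A'.det ≠ 0 := by
    intro h0
    obtain ⟨v, hv0, hv⟩ := Matrix.exists_mulVec_eq_zero_iff.2 h0
    have h7 : ∀ i, v i = 0 := by
      have hsum : ∑ j, v j • c' j = 0 := by
        funext i
        have h8 := congrFun hv i
        simp only [Matrix.mulVec, dotProduct, Pi.zero_apply, hA',
          Matrix.of_apply] at h8
        simp only [Finset.sum_apply, Pi.smul_apply, smul_eq_mul, Pi.zero_apply]
        rw [← h8]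
        exact Finset.sum_congr rfl fun j _ => mul_comm _ _
      exact Fintype.linearIndependent_iff.1 hindQ _ hsum
    exact hv0 (funext h7)
  -- matrix identities
  set Uq : Matrix (Fin (n - l)) (Fin (n - l)) ℚ_[p] :=
    Matrix.of fun i j => ((u j i : ℤ_[p]) : ℚ_[p]) with hUq
  set Wq : Matrix (Fin (n - l)) (Fin (n - l)) ℚ_[p] :=
    Matrix.of fun i j => ((w j i : ℤ_[p]) : ℚ_[p]) with hWq
  have hDA : ∀ i j, (Dq * A) i j = Dq.mulVec (c j) i := by
    intro i j
    simp [Matrix.mul_apply, Matrix.mulVec, dotProduct, hA]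
  have hE : Dq * A = A' * Uq := by
    ext i j
    rw [hDA i j, ← congrFun (huu j) i]
    simp only [Matrix.mul_apply, Finset.sum_apply, Pi.smul_apply, hUq, hA', Matrix.of_apply]
    refine Finset.sum_congr rfl fun k _ => ?_
    rw [Algebra.smul_def, PadicInt.algebraMap_apply, mul_comm]
  have hA'eq : A' = (Dq * A) * Wq := by
    ext i j
    have h9 : A' i j = c' j i := rfl
    rw [h9, ← congrFun (hww j) i, Matrix.mul_apply, Finset.sum_apply]
    refine Finset.sum_congr rfl fun k _ => ?_
    rw [hDA i k, Pi.smul_apply, Algebra.smul_def, PadicInt.algebraMap_apply, mul_comm]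
    rfl
  have hUW : Uq.det * Wq.det = 1 := by
    have h3 : A' * (Uq * Wq) = A' := by
      rw [← Matrix.mul_assoc, ← hE, ← hA'eq]
    have h4 := congrArg Matrix.det h3
    rw [Matrix.det_mul, Matrix.det_mul] at h4
    have h5 : A'.det * (Uq.det * Wq.det) = A'.det * 1 := by rw [mul_one]; exact h4
    exact mul_left_cancel₀ hA'det h5
  -- determinant bookkeeping
  have hdetDq : Dq.det = ((D.det : ℤ_[p]) : ℚ_[p]) := by
    rw [hDq]
    exact (RingHom.map_det PadicInt.Coe.ringHom D).symm
  have hD0 : D.det ≠ 0 := by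
    intro h0
    rw [h0, mul_zero] at hdet
    exact zero_ne_one hdet
  have hDq0 : Dq.det ≠ 0 := by
    rw [hdetDq]
    exact PadicInt.coe_ne_zero.mpr hD0
  have hU0 : Uq.det ≠ 0 := by
    intro h0
    rw [h0, zero_mul] at hUW
    exact zero_ne_one hUW
  have hA0 : A.det ≠ 0 := by
    intro h0
    have h9 := congrArg Matrix.det hE
    rw [Matrix.det_mul, Matrix.det_mul, h0, mul_zero] at h9
    exact mul_ne_zero hA'det hU0 h9.symm
  have hval : Dq.det.valuation + A.det.valuation = A'.det.valuation + Uq.det.valuation := by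
    have h10 : (Dq.det * A.det).valuation = (A'.det * Uq.det).valuation := by
      rw [← Matrix.det_mul, ← Matrix.det_mul, hE]
    rwa [Padic.valuation_mul hDq0 hA0, Padic.valuation_mul hA'det hU0] at h10
  have hvD : Dq.det.valuation = 0 := by
    rw [hdetDq]
    refine val_coe_zero (c := (Matrix.of fun a a' : Fin l =>
      gm ⟨a.val, by have := a.isLt; omega⟩ ⟨a'.val, by have := a'.isLt; omega⟩).det) ?_
    rw [mul_comm]
    exact hdet
  -- valuation of det Uq is zero
  set Uz : Matrix (Fin (n - l)) (Fin (n - l)) ℤ_[p] := Matrix.of fun i j => u j i with hUz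
  set Wz : Matrix (Fin (n - l)) (Fin (n - l)) ℤ_[p] := Matrix.of fun i j => w j i with hWz
  have hUzdet : Uq.det = ((Uz.det : ℤ_[p]) : ℚ_[p]) :=
    (RingHom.map_det PadicInt.Coe.ringHom Uz).symm
  have hWzdet : Wq.det = ((Wz.det : ℤ_[p]) : ℚ_[p]) :=
    (RingHom.map_det PadicInt.Coe.ringHom Wz).symm
  have hUWz : Uz.det * Wz.det = 1 := by
    have h11 : ((Uz.det * Wz.det : ℤ_[p]) : ℚ_[p]) = ((1 : ℤ_[p]) : ℚ_[p]) := by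
      push_cast
      rw [← hUzdet, ← hWzdet, hUW]
    exact Subtype.coe_injective h11
  have hvU : Uq.det.valuation = 0 := by
    rw [hUzdet]
    exact val_coe_zero hUWz
  have hfinal : A.det.valuation = A'.det.valuation := by linarith [hval, hvD, hvU]
  have h20 : (Matrix.of fun i j : Fin (n - l) =>
      ((b j : Fin n → ℚ_[p]) ⟨l + i.val, by have := i.isLt; omega⟩)) = A := by
    ext i j; rfl
  have h21 : (Matrix.of fun i j : Fin (n - l) =>
      ((b' j : Fin n → ℚ_[p]) ⟨l + i.val, by have := i.isLt; omega⟩)) = A' := by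
    ext i j; rfl
  rw [h20, h21, hfinal]
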